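/- Let α, β ∈ ℂ with α ≠ β, let y : ℂ → ℂ be continuous on the segment [α, β], and define the entire function U(z) = e^{αz} · ∫_{[α,β]} y(η)·e^{−zη} dη. If there exists a polynomial P with complex coefficients such that U(z) = P(z) for all z ∈ ℂ, then y(η) = 0 for every η in the segment [α, β]. -/

import Mathlib

open Complex intervalIntegral MeasureTheory

lemma aux_zero_of_integral_normSq (f : ℝ → ℂ) (hf : ContinuousOn f (Set.Icc 0 1))
    (h : (∫ s in (0:ℝ)..1, Complex.normSq (f s)) = 0) : ∀ s ∈ Set.Icc (0:ℝ) 1, f s = 0 := by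
  by_contra hcon
  push_neg at hcon
  obtain ⟨x₀, hx₀, hfx₀⟩ := hcon
  set c : ℝ := Complex.normSq (f x₀) / 2 with hc
  have hcpos : 0 < c := by
    have := Complex.normSq_pos.mpr hfx₀
    positivity
  -- continuity gives a neighborhood where normSq (f x) > c
  have hcont : ContinuousWithinAt (fun x => Complex.normSq (f x)) (Set.Icc 0 1) x₀ :=
    (Complex.continuous_normSq.comp_continuousOn hf) x₀ hx₀
  have hev : ∀ᶠ x in nhdsWithin x₀ (Set.Icc 0 1), c < Complex.normSq (f x) := by
    apply hcont.eventually_const_lt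
    have := Complex.normSq_pos.mpr hfx₀
    simp only [hc]
    linarith
  rw [eventually_nhdsWithin_iff] at hev
  obtain ⟨δ, hδpos, hball⟩ := Metric.eventually_nhds_iff_ball.mp hev
  -- find a nondegenerate interval inside ball ∩ Icc
  set a : ℝ := max 0 (x₀ - δ/2) with ha
  set b : ℝ := min 1 (x₀ + δ/2) with hb
  have hab : a < b := by
    rcases le_or_gt b 1 with h1 | h1
    · rcases max_cases 0 (x₀ - δ/2) with ⟨h2, h3⟩ | ⟨h2, h3⟩ <;>
      rcases min_cases 1 (x₀ + δ/2) with ⟨h4, h5⟩ | ⟨h4, h5⟩ <;>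
      · simp only [ha, hb, h2, h4] at * <;>
        first
        | linarith [hx₀.1, hx₀.2]
    · linarith [min_le_left 1 (x₀ + δ/2), hb ▸ h1]
  have hsub : Set.Ioo a b ⊆ Metric.ball x₀ δ ∩ Set.Icc 0 1 := by
    intro x hx
    constructor
    · rw [Metric.mem_ball, Real.dist_eq, abs_lt]
      constructor
      · have := hx.1; have : a ≥ x₀ - δ/2 := le_max_right _ _; linarith [hx.1]
      · have : b ≤ x₀ + δ/2 := min_le_right _ _; linarith [hx.2]
    · exact ⟨le_of_lt (lt_of_le_of_lt (le_max_left _ _) hx.1),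
        le_of_lt (lt_of_lt_of_le hx.2 (min_le_left _ _))⟩
  -- integrability and a.e. vanishing
  have hint : IntervalIntegrable (fun s => Complex.normSq (f s)) volume 0 1 := by
    apply ContinuousOn.intervalIntegrable
    rw [Set.uIcc_of_le (by norm_num : (0:ℝ) ≤ 1)]
    exact Complex.continuous_normSq.comp_continuousOn hf
  have hIoc : IntegrableOn (fun s => Complex.normSq (f s)) (Set.Ioc 0 1) volume := by
    simpa using hint.1
  have hset : (∫ s in Set.Ioc (0:ℝ) 1, Complex.normSq (f s)) = 0 := by
    rw [← intervalIntegral.integral_of_le (by norm_num : (0:ℝ) ≤ 1)]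
    exact h
  have hnonneg : 0 ≤ᵐ[volume.restrict (Set.Ioc (0:ℝ) 1)] fun s => Complex.normSq (f s) :=
    Filter.Eventually.of_forall fun x => Complex.normSq_nonneg _
  have hae : (fun s => Complex.normSq (f s)) =ᵐ[volume.restrict (Set.Ioc (0:ℝ) 1)] 0 :=
    (MeasureTheory.integral_eq_zero_iff_of_nonneg_ae hnonneg hIoc).mp hset
  -- derive a contradiction
  have hnull : volume.restrict (Set.Ioc (0:ℝ) 1) {x | Complex.normSq (f x) ≠ 0} = 0 := by
    have := hae
    rw [Filter.EventuallyEq, MeasureTheory.ae_iff] at this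
    simpa using this
  have hmem : Set.Ioo a b ⊆ {x | Complex.normSq (f x) ≠ 0} := by
    intro x hx
    have hx' := hsub hx
    have := hball x hx'.1 hx'.2
    exact fun hz => by rw [hz] at this; exact absurd this (by linarith)
  have hle : volume.restrict (Set.Ioc (0:ℝ) 1) (Set.Ioo a b) = 0 :=
    MeasureTheory.measure_mono_null hmem hnull
  rw [MeasureTheory.Measure.restrict_apply measurableSet_Ioo] at hle
  have hinter : Set.Ioo a b ∩ Set.Ioc 0 1 = Set.Ioo a b := by
    apply Set.inter_eq_left.mpr
    intro x hx
    exact ⟨lt_of_le_of_lt (le_max_left _ _) hx.1, le_of_lt (lt_of_lt_of_le hx.2 (min_le_left _ _))⟩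
  rw [hinter, Real.volume_Ioo] at hle
  exact absurd hle (by simp [ENNReal.ofReal_eq_zero]; linarith)


noncomputable def expCM (w : ℂ) : C(Set.Icc (0:ℝ) 1, ℂ) :=
  ⟨fun x => Complex.exp (-w * (x : ℝ)), by fun_prop⟩

lemma expCM_mul (w₁ w₂ : ℂ) : expCM w₁ * expCM w₂ = expCM (w₁ + w₂) := by
  ext x
  simp only [ContinuousMap.mul_apply, expCM, ContinuousMap.coe_mk, ← Complex.exp_add]
  ring_nf

lemma expCM_star (w : ℂ) : star (expCM w) = expCM (starRingEnd ℂ w) := by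
  ext x
  simp only [ContinuousMap.star_apply, expCM, ContinuousMap.coe_mk]
  rw [RCLike.star_def, ← Complex.exp_conj]
  congr 1
  simp [map_mul, Complex.conj_ofReal]

lemma expCM_one : (1 : C(Set.Icc (0:ℝ) 1, ℂ)) = expCM 0 := by
  ext x; simp [expCM]

noncomputable def expAlg : StarSubalgebra ℂ C(Set.Icc (0:ℝ) 1, ℂ) where
  carrier := Submodule.span ℂ (Set.range expCM)
  mul_mem' := by
    intro a b ha hb
    have key : ∀ x ∈ Submodule.span ℂ (Set.range expCM),
        ∀ y ∈ Submodule.span ℂ (Set.range expCM),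
          x * y ∈ Submodule.span ℂ (Set.range expCM) := by
      intro x hx
      refine Submodule.span_induction ?_ ?_ ?_ ?_ hx
      · rintro u ⟨w₁, rfl⟩ y hy
        refine Submodule.span_induction ?_ ?_ ?_ ?_ hy
        · rintro v ⟨w₂, rfl⟩
          rw [expCM_mul]
          exact Submodule.subset_span ⟨w₁ + w₂, rfl⟩
        · simp
        · intro p q _ _ hp hq
          rw [mul_add]; exact Submodule.add_mem _ hp hq
        · intro c p _ hp
          rw [mul_smul_comm]; exact Submodule.smul_mem _ _ hp
      · intro y hy; simp
      · intro p q _ _ hp hq y hy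
        rw [add_mul]; exact Submodule.add_mem _ (hp y hy) (hq y hy)
      · intro c p _ hp y hy
        rw [smul_mul_assoc]; exact Submodule.smul_mem _ _ (hp y hy)
    exact key a ha b hb
  one_mem' := by
    rw [expCM_one]; exact Submodule.subset_span ⟨0, rfl⟩
  add_mem' := fun ha hb => Submodule.add_mem _ ha hb
  zero_mem' := Submodule.zero_mem _
  algebraMap_mem' := by
    intro c
    show algebraMap ℂ C(Set.Icc (0:ℝ) 1, ℂ) c ∈ Submodule.span ℂ (Set.range expCM)
    have h1 : algebraMap ℂ C(Set.Icc (0:ℝ) 1, ℂ) c = c • (1 : C(Set.Icc (0:ℝ) 1, ℂ)) := by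
      ext x; simp [Algebra.algebraMap_eq_smul_one]
    rw [h1, expCM_one]
    exact Submodule.smul_mem _ _ (Submodule.subset_span ⟨0, rfl⟩)
  star_mem' := by
    intro a ha
    show star a ∈ Submodule.span ℂ (Set.range expCM)
    refine Submodule.span_induction ?_ ?_ ?_ ?_ ha
    · rintro u ⟨w, rfl⟩
      rw [expCM_star]
      exact Submodule.subset_span ⟨_, rfl⟩
    · simp
    · intro p q _ _ hp hq
      rw [star_add]; exact Submodule.add_mem _ hp hq
    · intro c p _ hp
      rw [star_smul]
      exact Submodule.smul_mem _ _ hp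

lemma expAlg_separates : expAlg.SeparatesPoints := by
  intro x y hxy
  refine ⟨_, ⟨expCM 1, Submodule.subset_span ⟨1, rfl⟩, rfl⟩, ?_⟩
  simp only [expCM, ContinuousMap.coe_mk, neg_mul, one_mul]
  intro hfeq
  apply hxy
  have : Complex.exp (-(x:ℝ) : ℂ) = Complex.exp (-(y:ℝ) : ℂ) := by
    simpa using hfeq
  rw [← Complex.ofReal_neg, ← Complex.ofReal_neg, ← Complex.ofReal_exp,
    ← Complex.ofReal_exp] at this
  have h2 : Real.exp (-(x:ℝ)) = Real.exp (-(y:ℝ)) := by exact_mod_cast this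
  have := Real.exp_injective h2
  exact Subtype.ext (by linarith [neg_injective this])
lemma aux_SW (f : ℝ → ℂ) (hf : ContinuousOn f (Set.Icc 0 1))
    (h : ∀ w : ℂ, (∫ s in (0:ℝ)..1, f s * Complex.exp (-w * s)) = 0) :
    ∀ s ∈ Set.Icc (0:ℝ) 1, f s = 0 := by
  have h01 : (0:ℝ) ≤ 1 := by norm_num
  have huIcc : Set.uIcc (0:ℝ) 1 = Set.Icc 0 1 := Set.uIcc_of_le h01
  set pr : ℝ → Set.Icc (0:ℝ) 1 := fun s => Set.projIcc (0:ℝ) 1 h01 s with hpr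
  -- the functional
  set φ : C(Set.Icc (0:ℝ) 1, ℂ) → ℂ := fun u => ∫ s in (0:ℝ)..1, u (pr s) * f s with hφ
  have hint : ∀ u : C(Set.Icc (0:ℝ) 1, ℂ),
      IntervalIntegrable (fun s => u (pr s) * f s) volume 0 1 := by
    intro u
    apply ContinuousOn.intervalIntegrable
    rw [huIcc]
    exact ((u.continuous.comp (continuous_projIcc)).continuousOn).mul hf
  have hproj : ∀ s ∈ Set.Icc (0:ℝ) 1, ((pr s : Set.Icc (0:ℝ) 1) : ℝ) = s := by
    intro s hs
    simp only [hpr]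
    rw [Set.projIcc_of_mem _ hs]
  -- φ vanishes on the span
  have hspan : ∀ u ∈ Submodule.span ℂ (Set.range expCM), φ u = 0 := by
    intro u hu
    refine Submodule.span_induction ?_ ?_ ?_ ?_ hu
    · rintro v ⟨w, rfl⟩
      have : φ (expCM w) = ∫ s in (0:ℝ)..1, f s * Complex.exp (-w * s) := by
        apply intervalIntegral.integral_congr
        intro s hs
        rw [huIcc] at hs
        simp only [expCM, ContinuousMap.coe_mk, hproj s hs]
        ring
      rw [this, h w]
    · simp only [hφ, ContinuousMap.zero_apply, zero_mul, intervalIntegral.integral_zero]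
    · intro p q _ _ hp hq
      have : φ (p + q) = φ p + φ q := by
        simp only [hφ, ContinuousMap.add_apply, add_mul]
        exact intervalIntegral.integral_add (hint p) (hint q)
      rw [this, hp, hq, add_zero]
    · intro c p _ hp
      have : φ (c • p) = c * φ p := by
        simp only [hφ, ContinuousMap.smul_apply, smul_eq_mul, mul_assoc]
        exact intervalIntegral.integral_const_mul c _
      rw [this, hp, mul_zero]
  -- the conjugate of f as a continuous map
  have hgc : Continuous fun x : Set.Icc (0:ℝ) 1 => (starRingEnd ℂ) (f x) :=
    Complex.continuous_conj.comp hf.restrict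
  set g : C(Set.Icc (0:ℝ) 1, ℂ) := ⟨_, hgc⟩ with hg
  -- density
  have htop := ContinuousMap.starSubalgebra_topologicalClosure_eq_top_of_separatesPoints
    expAlg expAlg_separates
  have hgcl : g ∈ closure (expAlg : Set C(Set.Icc (0:ℝ) 1, ℂ)) := by
    rw [← StarSubalgebra.topologicalClosure_coe, htop]
    trivial
  -- bound on f
  obtain ⟨M, hM⟩ := isCompact_Icc.exists_bound_of_continuousOn hf
  have hM0 : 0 ≤ M := le_trans (norm_nonneg _) (hM 0 ⟨le_refl _, h01⟩)
  -- φ g is the integral of normSq f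
  set I : ℝ := ∫ s in (0:ℝ)..1, Complex.normSq (f s) with hI
  have hφg : φ g = (I : ℂ) := by
    have e1 : φ g = ∫ s in (0:ℝ)..1, ((Complex.normSq (f s) : ℝ) : ℂ) := by
      apply intervalIntegral.integral_congr
      intro s hs
      rw [huIcc] at hs
      simp only [hg, ContinuousMap.coe_mk, hproj s hs]
      rw [Complex.normSq_eq_conj_mul_self]
    rw [e1, hI, intervalIntegral.integral_ofReal]
  -- approximation argument
  have hIle : ∀ ε : ℝ, 0 < ε → |I| ≤ ε * M := by
    intro ε hε
    obtain ⟨p, hpA, hpd⟩ := Metric.mem_closure_iff.mp hgcl ε hε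
    have hφp : φ p = 0 := hspan p hpA
    have hsubint : φ g - φ p = ∫ s in (0:ℝ)..1, (g (pr s) - p (pr s)) * f s := by
      rw [hφ]
      rw [← intervalIntegral.integral_sub (hint g) (hint p)]
      congr 1; ext s; ring
    have hbound : ‖φ g - φ p‖ ≤ ε * M * |(1:ℝ) - 0| := by
      rw [hsubint]
      apply intervalIntegral.norm_integral_le_of_norm_le_const
      intro x hx
      have hx' : x ∈ Set.Icc (0:ℝ) 1 := by
        rw [Set.uIoc_of_le h01] at hx
        exact ⟨le_of_lt hx.1, hx.2⟩
      rw [norm_mul]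
      have h1 : ‖g (pr x) - p (pr x)‖ ≤ ε := by
        have := ContinuousMap.dist_apply_le_dist (f := g) (g := p) (pr x)
        rw [dist_eq_norm] at this
        exact le_of_lt (lt_of_le_of_lt this hpd)
      have h2 : ‖f x‖ ≤ M := hM x hx'
      exact mul_le_mul h1 h2 (norm_nonneg _) (le_of_lt hε)
    rw [hφp, sub_zero, hφg] at hbound
    simpa using hbound
  have hIzero : I = 0 := by
    have habs : |I| ≤ 0 := by
      by_contra hcon
      push_neg at hcon
      have := hIle (|I| / (2 * (M + 1))) (by positivity)
      have hlt : |I| / (2 * (M + 1)) * M < |I| := by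
        rw [div_mul_eq_mul_div, div_lt_iff₀ (by positivity)]
        nlinarith [abs_nonneg I]
      linarith
    have := abs_nonneg I
    exact abs_eq_zero.mp (le_antisymm habs this)
  exact aux_zero_of_integral_normSq f hf (hI ▸ hIzero)

/-- Lemma 18: if `y` is continuous on the segment `[α, β]` (`α ≠ β`) and
the entire function `U(z) = e^{αz}·∫_{[α,β]} y(η)e^{−zη} dη` is a polynomial,
then `y = 0` on `[α, β]`. -/
theorem segment_integral_polynomial_implies_zero
    (α β : ℂ) (hαβ : α ≠ β) (y : ℂ → ℂ) (hy : ContinuousOn y (segment ℝ α β))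
    (P : Polynomial ℂ)
    (hU : ∀ z : ℂ,
      Complex.exp (α * z) *
        ((β - α) * ∫ s in (0:ℝ)..1,
          y (α + (s : ℂ) * (β - α)) * Complex.exp (-z * (α + (s : ℂ) * (β - α)))) =
      P.eval z) :
    ∀ η ∈ segment ℝ α β, y η = 0 := by
  set Δ : ℂ := β - α with hΔdef
  have hΔ : Δ ≠ 0 := sub_ne_zero.mpr (Ne.symm hαβ)
  set f : ℝ → ℂ := fun s => y (α + (s : ℂ) * Δ) with hfdef
  -- the affine parametrization maps Icc 0 1 onto the segment
  have hmaps : Set.MapsTo (fun s : ℝ => α + (s : ℂ) * Δ) (Set.Icc 0 1) (segment ℝ α β) := by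
    intro s hs
    rw [segment_eq_image' (𝕜 := ℝ) α β]
    exact ⟨s, hs, by dsimp only; rw [Complex.real_smul]⟩
  have hf : ContinuousOn f (Set.Icc (0:ℝ) 1) := by
    apply hy.comp _ hmaps
    fun_prop
  -- key identity
  have key : ∀ z : ℂ,
      Δ * (∫ s in (0:ℝ)..1, f s * Complex.exp (-(z * Δ) * s)) = P.eval z := by
    intro z
    have hcongr : (∫ s in (0:ℝ)..1,
        y (α + (s : ℂ) * Δ) * Complex.exp (-z * (α + (s : ℂ) * Δ)))
        = ∫ s in (0:ℝ)..1, Complex.exp (-z * α) * (f s * Complex.exp (-(z * Δ) * s)) := by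
      apply intervalIntegral.integral_congr
      intro s _
      dsimp only
      have : -z * (α + (s : ℂ) * Δ) = -z * α + -(z * Δ) * s := by ring
      rw [this, Complex.exp_add]
      ring
    have := hU z
    rw [hcongr, intervalIntegral.integral_const_mul] at this
    calc Δ * (∫ s in (0:ℝ)..1, f s * Complex.exp (-(z * Δ) * s))
        = Complex.exp (α * z) * Complex.exp (-z * α) *
            (Δ * ∫ s in (0:ℝ)..1, f s * Complex.exp (-(z * Δ) * s)) := by
          rw [← Complex.exp_add]
          have : α * z + -z * α = 0 := by ring
          rw [this, Complex.exp_zero, one_mul]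
      _ = P.eval z := by rw [← this]; ring
  -- bound on f
  obtain ⟨M, hM⟩ := isCompact_Icc.exists_bound_of_continuousOn hf
  have hM0 : 0 ≤ M := le_trans (norm_nonneg _) (hM 0 ⟨le_refl _, by norm_num⟩)
  have hnsq : 0 < Complex.normSq Δ := Complex.normSq_pos.mpr hΔ
  -- decay bound
  have decay : ∀ t : ℝ, 0 < t →
      ‖∫ s in (0:ℝ)..1, f s * Complex.exp (-(((t * Complex.normSq Δ : ℝ)) : ℂ) * s)‖
        ≤ M / (t * Complex.normSq Δ) := by
    intro t ht
    set k : ℝ := t * Complex.normSq Δ with hk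
    have hkpos : 0 < k := by positivity
    have hnorm : ∀ s : ℝ, ‖f s * Complex.exp (-(k : ℂ) * s)‖ = ‖f s‖ * Real.exp (-(k * s)) := by
      intro s
      rw [norm_mul]
      congr 1
      rw [Complex.norm_exp]
      congr 1
      have h2 : (-(k:ℂ)) * (s:ℂ) = ((-(k*s) : ℝ) : ℂ) := by push_cast; ring
      rw [h2, Complex.ofReal_re]
    have hibd : IntervalIntegrable (fun s => M * Real.exp (-(k * s))) MeasureTheory.volume 0 1 := by
      apply ContinuousOn.intervalIntegrable
      fun_prop
    have hle1 : ‖∫ s in (0:ℝ)..1, f s * Complex.exp (-(k : ℂ) * s)‖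
        ≤ |∫ s in (0:ℝ)..1, M * Real.exp (-(k * s))| := by
      apply intervalIntegral.norm_integral_le_abs_of_norm_le _ hibd
      have huIoc : Set.uIoc (0:ℝ) 1 = Set.Ioc 0 1 := Set.uIoc_of_le (by norm_num)
      rw [huIoc]
      filter_upwards [MeasureTheory.ae_restrict_mem measurableSet_Ioc] with s hs
      rw [hnorm s]
      exact mul_le_mul_of_nonneg_right (hM s ⟨le_of_lt hs.1, hs.2⟩) (Real.exp_nonneg _)
    have hnn : 0 ≤ ∫ s in (0:ℝ)..1, M * Real.exp (-(k * s)) :=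
      intervalIntegral.integral_nonneg (by norm_num) (fun u _ => by positivity)
    rw [_root_.abs_of_nonneg hnn] at hle1
    have hgen : ∀ c : ℝ, (-c)⁻¹ * (Real.exp (-c) - 1) = (1 - Real.exp (-c)) / c := by
      intro c; rw [inv_neg, div_eq_mul_inv]; ring
    have hval : (∫ s in (0:ℝ)..1, M * Real.exp (-(k * s)))
        = M * ((1 - Real.exp (-k)) / k) := by
      rw [intervalIntegral.integral_const_mul]
      congr 1
      have h3 : ∀ s : ℝ, Real.exp (-(k * s)) = Real.exp ((-k) * s) := by intro s; rw [neg_mul]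
      simp_rw [h3]
      rw [intervalIntegral.integral_comp_mul_left Real.exp (by linarith : (-k) ≠ 0)]
      rw [mul_zero, mul_one, integral_exp, Real.exp_zero, smul_eq_mul]
      exact hgen k
    rw [hval] at hle1
    refine le_trans hle1 ?_
    rw [div_eq_mul_inv M k, div_eq_mul_inv, ← mul_assoc]
    apply mul_le_mul_of_nonneg_right _ (inv_nonneg.mpr (le_of_lt hkpos))
    nlinarith [Real.exp_nonneg (-k)]
  -- the polynomial tends to 0 along t • conj Δ
  have hT : Filter.Tendsto (fun t : ℝ => P.eval ((t:ℂ) * (starRingEnd ℂ) Δ))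
      Filter.atTop (nhds 0) := by
    apply squeeze_zero_norm' (a := fun t : ℝ => (‖Δ‖ * M) / Complex.normSq Δ / t)
    · filter_upwards [Filter.eventually_gt_atTop 0] with t ht
      have hz : ((t:ℂ) * (starRingEnd ℂ) Δ) * Δ = (((t * Complex.normSq Δ : ℝ)) : ℂ) := by
        push_cast
        rw [mul_assoc, mul_comm ((starRingEnd ℂ) Δ) Δ, Complex.mul_conj]
      have hkey := key ((t:ℂ) * (starRingEnd ℂ) Δ)
      rw [hz] at hkey
      rw [← hkey, norm_mul]
      calc ‖Δ‖ * ‖∫ s in (0:ℝ)..1,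
            f s * Complex.exp (-(((t * Complex.normSq Δ : ℝ)) : ℂ) * s)‖
          ≤ ‖Δ‖ * (M / (t * Complex.normSq Δ)) :=
            mul_le_mul_of_nonneg_left (decay t ht) (norm_nonneg _)
        _ = (‖Δ‖ * M) / Complex.normSq Δ / t := by
            rw [div_div, mul_div_assoc, mul_comm (Complex.normSq Δ) t]
    · have h5 : Filter.Tendsto (fun t : ℝ => t⁻¹) Filter.atTop (nhds 0) := tendsto_inv_atTop_zero
      have := h5.const_mul ((‖Δ‖ * M) / Complex.normSq Δ)
      simpa [div_eq_mul_inv, mul_assoc] using this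
  -- hence P = 0
  have hP : ∀ z : ℂ, P.eval z = 0 := by
    have hP0 : P = 0 := by
      by_cases hdeg : 0 < P.degree
      · exfalso
        have hzt : Filter.Tendsto (fun t : ℝ => ‖(t:ℂ) * (starRingEnd ℂ) Δ‖)
            Filter.atTop Filter.atTop := by
          have h1 : ∀ t : ℝ, ‖(t:ℂ) * (starRingEnd ℂ) Δ‖ = |t| * ‖Δ‖ := by
            intro t
            rw [norm_mul, Complex.norm_real, RCLike.norm_conj, Real.norm_eq_abs]
          simp_rw [h1]
          exact Filter.Tendsto.atTop_mul_const (norm_pos_iff.mpr hΔ) Filter.tendsto_abs_atTop_atTop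
        have h2 := Polynomial.tendsto_norm_atTop P hdeg hzt
        have h3 : Filter.Tendsto (fun t : ℝ => ‖P.eval ((t:ℂ) * (starRingEnd ℂ) Δ)‖)
            Filter.atTop (nhds 0) := by simpa using hT.norm
        exact not_tendsto_atTop_of_tendsto_nhds h3 h2
      · have hle : P.degree ≤ 0 := not_lt.mp hdeg
        have hC := Polynomial.eq_C_of_degree_le_zero hle
        have hconst : (fun t : ℝ => P.eval ((t:ℂ) * (starRingEnd ℂ) Δ))
            = fun _ => P.coeff 0 := funext fun t => by conv_lhs => rw [hC, Polynomial.eval_C]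
        rw [hconst] at hT
        have hc0 : P.coeff 0 = 0 := tendsto_nhds_unique tendsto_const_nhds hT
        rw [hC, hc0, Polynomial.C_0]
    intro z
    rw [hP0, Polynomial.eval_zero]
  -- the Laplace transform of f vanishes identically
  have hL : ∀ w : ℂ, (∫ s in (0:ℝ)..1, f s * Complex.exp (-w * s)) = 0 := by
    intro w
    have hkey := key (w / Δ)
    rw [hP (w / Δ)] at hkey
    have hzz : w / Δ * Δ = w := div_mul_cancel₀ w hΔ
    rw [hzz] at hkey
    rcases mul_eq_zero.mp hkey with h | h
    · exact absurd h hΔ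
    · exact h
  -- conclude
  have hfz := aux_SW f hf hL
  intro η hη
  rw [segment_eq_image' (𝕜 := ℝ) α β] at hη
  obtain ⟨s, hs, rfl⟩ := hη
  dsimp only
  rw [Complex.real_smul]
  exact hfz s hs
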